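/- If α is a Pythagorean angle, i.e. cos α = a/c and sin α = b/c for a primitive Pythagorean triple (a,b,c) with a²+b²=c² and gcd(a,b,c)=1, then α is not a hinge angle: there is no Gaussian integer z = p+qi and integer k with p·cos α − q·sin α = k + 1/2. -/

import Mathlib

open Real Complex

/-- A Pythagorean angle (cos α = a/c, sin α = b/c for a primitive
Pythagorean triple) is not a hinge angle. -/
theorem pythagorean_not_hinge (α : ℝ) (a b c : ℤ) (hc : 0 < c)
    (htriple : a ^ 2 + b ^ 2 = c ^ 2)
    (hprim : Int.gcd a (Int.gcd b c) = 1)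
    (hcos : Real.cos α = (a : ℝ) / c) (hsin : Real.sin α = (b : ℝ) / c) :
    ¬ ∃ p q k : ℤ, (p : ℝ) * Real.cos α - (q : ℝ) * Real.sin α = (k : ℝ) + 1 / 2 := by
  rintro ⟨p, q, k, h⟩
  have hc0 : (c : ℝ) ≠ 0 := Int.cast_ne_zero.mpr hc.ne'
  -- not both a, b even
  have hnotboth : ¬ ((2 : ℤ) ∣ a ∧ (2 : ℤ) ∣ b) := by
    rintro ⟨ha, hb⟩
    have hcc : (2 : ℤ) ∣ c := by
      have h2 : (2 : ℤ) ∣ c ^ 2 := by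
        rw [← htriple]
        exact dvd_add (dvd_pow ha two_ne_zero) (dvd_pow hb two_ne_zero)
      exact Int.Prime.dvd_pow' Nat.prime_two h2
    have h1 : (2 : ℕ) ∣ Int.gcd a (Int.gcd b c) := by
      refine Nat.dvd_gcd ?_ ?_
      · exact Int.natAbs_dvd_natAbs.mpr ha
      · exact Nat.dvd_gcd (Int.natAbs_dvd_natAbs.mpr hb) (Int.natAbs_dvd_natAbs.mpr hcc)
    rw [hprim] at h1
    omega
  -- c is odd
  have hodd : Odd c := by
    rw [← Int.not_even_iff_odd]
    intro hce
    obtain ⟨z, hz⟩ := hce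
    rcases Int.even_or_odd a with ha | ha <;> rcases Int.even_or_odd b with hb | hb
    · exact hnotboth ⟨ha.two_dvd, hb.two_dvd⟩
    · obtain ⟨x, hx⟩ := ha
      obtain ⟨y, hy⟩ := hb
      have h4 : 4 * (x * x + y * y + y) + 1 = 4 * (z * z) := by
        subst hx hy hz; ring_nf at htriple ⊢; linarith
      omega
    · obtain ⟨x, hx⟩ := ha
      obtain ⟨y, hy⟩ := hb
      have h4 : 4 * (x * x + x + y * y) + 1 = 4 * (z * z) := by
        subst hx hy hz; ring_nf at htriple ⊢; linarith
      omega
    · obtain ⟨x, hx⟩ := ha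
      obtain ⟨y, hy⟩ := hb
      have h4 : 4 * (x * x + x + y * y + y) + 2 = 4 * (z * z) := by
        subst hx hy hz; ring_nf at htriple ⊢; linarith
      omega
  -- derive the integer equation
  rw [hcos, hsin] at h
  have hreal : (2 * (p * a) - 2 * (q * b) : ℝ) = ((2 * k + 1) * c : ℝ) := by
    field_simp at h
    push_cast
    nlinarith [h]
  have hint : 2 * (p * a) - 2 * (q * b) = (2 * k + 1) * c := by exact_mod_cast hreal
  have he : Even (2 * (p * a) - 2 * (q * b)) := ⟨p * a - q * b, by ring⟩
  have ho : Odd ((2 * k + 1) * c) := (odd_two_mul_add_one k).mul hodd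
  rw [hint] at he
  exact (Int.not_odd_iff_even.mpr he) ho
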